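/- Let γ < 1/2, let n ≥ 2, and for each i ∈ ℕ define ε^(i) = γ^(i+1) / (10·log(n)·(i+1)²). Then for every k ∈ ℕ, the sum ∑_{i+j=k} ε^(i)·ε^(j) + ∑_{i+j=k-1} ε^(i)·ε^(j) is at most ε^(k)/log(n). -/

import Mathlib

open Finset

lemma basel_aux (m : ℕ) : ∑ a ∈ range (m+2), (1:ℝ)/((a:ℝ)+1)^2 ≤ 33/20 - 1/((m:ℝ)+5/2) := by
  induction m with
  | zero => simp [Finset.sum_range_succ]; norm_num
  | succ m ih =>
    rw [Finset.sum_range_succ]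
    have hx : (0:ℝ) ≤ (m:ℝ) := Nat.cast_nonneg m
    have h : (1:ℝ)/(((m+2:ℕ):ℝ)+1)^2 ≤ 1/((m:ℝ)+5/2) - 1/(((m:ℕ):ℝ)+1+5/2) := by
      push_cast
      rw [div_sub_div _ _ (by positivity) (by positivity), div_le_div_iff₀ (by positivity) (by positivity)]
      ring_nf
      nlinarith
    push_cast at h ⊢
    linarith

lemma basel_bound (m : ℕ) : ∑ a ∈ range m, (1:ℝ)/((a:ℝ)+1)^2 ≤ 33/20 := by
  have h1 : ∑ a ∈ range m, (1:ℝ)/((a:ℝ)+1)^2 ≤ ∑ a ∈ range (m+2), (1:ℝ)/((a:ℝ)+1)^2 := by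
    apply Finset.sum_le_sum_of_subset_of_nonneg (Finset.range_subset_range.mpr (by omega))
    intro i _ _; positivity
  have h2 := basel_aux m
  have h3 : (0:ℝ) < 1/((m:ℝ)+5/2) := by positivity
  linarith

lemma S_bound (k : ℕ) :
    ∑ p ∈ antidiagonal k, ((1:ℝ)/((p.1:ℝ)+1)^2) * ((1:ℝ)/((p.2:ℝ)+1)^2)
      ≤ (33/5)/((k:ℝ)+2)^2 := by
  have step : ∀ p ∈ antidiagonal k,
      ((1:ℝ)/((p.1:ℝ)+1)^2) * ((1:ℝ)/((p.2:ℝ)+1)^2)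
        ≤ (2/((k:ℝ)+2)^2) * ((1:ℝ)/((p.1:ℝ)+1)^2 + (1:ℝ)/((p.2:ℝ)+1)^2) := by
    intro p hp
    have hpk := Finset.HasAntidiagonal.mem_antidiagonal.mp hp
    set a : ℝ := (p.1:ℝ)+1 with ha
    set b : ℝ := (p.2:ℝ)+1 with hb
    have hab : a + b = (k:ℝ) + 2 := by
      rw [ha, hb]; push_cast [← hpk]; ring
    have ha1 : (1:ℝ) ≤ a := by simp [ha]
    have hb1 : (1:ℝ) ≤ b := by simp [hb]
    rw [← hab]
    rw [div_mul_div_comm, one_mul, div_add_div _ _ (by positivity) (by positivity),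
      div_mul_div_comm, mul_one, div_le_div_iff₀ (by positivity) (by positivity)]
    nlinarith [sq_nonneg (a - b), sq_nonneg (a*b), sq_nonneg a, sq_nonneg b]
  calc ∑ p ∈ antidiagonal k, ((1:ℝ)/((p.1:ℝ)+1)^2) * ((1:ℝ)/((p.2:ℝ)+1)^2)
      ≤ ∑ p ∈ antidiagonal k, (2/((k:ℝ)+2)^2) * ((1:ℝ)/((p.1:ℝ)+1)^2 + (1:ℝ)/((p.2:ℝ)+1)^2) :=
        Finset.sum_le_sum step
    _ = (2/((k:ℝ)+2)^2) * (∑ p ∈ antidiagonal k, ((1:ℝ)/((p.1:ℝ)+1)^2)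
          + ∑ p ∈ antidiagonal k, ((1:ℝ)/((p.2:ℝ)+1)^2)) := by
        rw [← Finset.mul_sum, Finset.sum_add_distrib]
    _ ≤ (2/((k:ℝ)+2)^2) * (33/20 + 33/20) := by
        have e1 : ∑ p ∈ antidiagonal k, ((1:ℝ)/((p.1:ℝ)+1)^2)
            = ∑ i ∈ range (k+1), (1:ℝ)/((i:ℝ)+1)^2 :=
          Finset.Nat.sum_antidiagonal_eq_sum_range_succ_mk _ k
        have e2 : ∑ p ∈ antidiagonal k, ((1:ℝ)/((p.2:ℝ)+1)^2)
            = ∑ i ∈ range (k+1), (1:ℝ)/((i:ℝ)+1)^2 := by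
          rw [Finset.Nat.sum_antidiagonal_eq_sum_range_succ_mk]
          rw [← Finset.sum_range_reflect]
          apply Finset.sum_congr rfl
          intro i hi
          have : k - (k + 1 - 1 - i) = i := by
            have := Finset.mem_range.mp hi; omega
          rw [this]
        rw [e1, e2]
        gcongr <;> exact basel_bound _
    _ = (33/5)/((k:ℝ)+2)^2 := by ring

lemma S_nonneg (k : ℕ) :
    0 ≤ ∑ p ∈ antidiagonal k, ((1:ℝ)/((p.1:ℝ)+1)^2) * ((1:ℝ)/((p.2:ℝ)+1)^2) := by
  apply Finset.sum_nonneg; intro p _; positivity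

theorem stmt_0 (γ : ℝ) (hγpos : 0 < γ) (hγ : γ < 1 / 2) (n : ℕ) (hn : 2 ≤ n)
    (ε : ℕ → ℝ)
    (hε : ∀ i : ℕ, ε i = γ ^ (i + 1) / (10 * Real.logb 2 n * ((i : ℝ) + 1) ^ 2))
    (k : ℕ) :
    (∑ p ∈ Finset.HasAntidiagonal.antidiagonal k, ε p.1 * ε p.2) +
      (if k = 0 then 0 else ∑ p ∈ Finset.HasAntidiagonal.antidiagonal (k - 1), ε p.1 * ε p.2) ≤
      ε k / Real.logb 2 n := by
  set L := Real.logb 2 n with hLdef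
  have hL1 : (1:ℝ) ≤ L := by
    rw [hLdef]
    calc (1:ℝ) = Real.logb 2 2 := by simp
      _ ≤ Real.logb 2 n := by
          apply Real.logb_le_logb_of_le one_lt_two two_pos
          exact_mod_cast hn
  have hLpos : (0:ℝ) < L := lt_of_lt_of_le one_pos hL1
  have hLne : L ≠ 0 := ne_of_gt hLpos
  -- rewrite each antidiagonal sum
  have key : ∀ m : ℕ, ∑ p ∈ antidiagonal m, ε p.1 * ε p.2
      = (γ^(m+2)/(100*L^2)) *
        ∑ p ∈ antidiagonal m, ((1:ℝ)/((p.1:ℝ)+1)^2) * ((1:ℝ)/((p.2:ℝ)+1)^2) := by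
    intro m
    rw [Finset.mul_sum]
    apply Finset.sum_congr rfl
    intro p hp
    have hpk := Finset.HasAntidiagonal.mem_antidiagonal.mp hp
    rw [hε, hε]
    have hpow : γ^(p.1+1) * γ^(p.2+1) = γ^(m+2) := by
      rw [← pow_add]; congr 1; omega
    have h1 : ((p.1:ℝ)+1) ≠ 0 := by positivity
    have h2 : ((p.2:ℝ)+1) ≠ 0 := by positivity
    field_simp
    rw [← hpow]
    ring
  rw [key k]
  have hSk := S_bound k
  have hSknn := S_nonneg k
  have hεk : ε k / L = γ^(k+1) / (10 * L^2 * ((k:ℝ)+1)^2) := by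
    rw [hε]
    field_simp
  rw [hεk]
  have hγ2 : γ ≤ 1/2 := le_of_lt hγ
  have hkpos : (0:ℝ) < (k:ℝ)+1 := by positivity
  have hk2pos : (0:ℝ) < (k:ℝ)+2 := by positivity
  have hgpow : (0:ℝ) < γ^(k+1) := pow_pos hγpos _
  have main : ∀ s t : ℝ, 0 < t → t ≤ s →
      γ * ((33/5)/s) + (33/5)/t ≤ 10/t := by
    intro s t ht hts
    have hs : 0 < s := lt_of_lt_of_le ht hts
    have ha : (33/5)/s ≤ (33/5)/t := by gcongr
    have hb : γ * ((33/5)/s) ≤ (1/2) * ((33/5)/t) :=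
      mul_le_mul hγ2 ha (by positivity) (by norm_num)
    have hc : (3/2) * ((33/5)/t) ≤ 10/t := by
      have he : (3/2) * ((33/5)/t) = (99/10)/t := by ring
      rw [he]
      gcongr
      norm_num
    linarith
  rcases Nat.eq_zero_or_pos k with hk0 | hk1
  · subst hk0
    rw [if_pos rfl, add_zero]
    have hb := S_bound 0
    push_cast at hb ⊢
    calc γ^(0+2)/(100*L^2) * (∑ p ∈ antidiagonal (0:ℕ), ((1:ℝ)/((p.1:ℝ)+1)^2) * ((1:ℝ)/((p.2:ℝ)+1)^2))
        ≤ γ^(0+2)/(100*L^2) * ((33/5)/((0:ℝ)+2)^2) := by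
          gcongr
      _ ≤ γ^(0+1)/(10*L^2*((0:ℝ)+1)^2) := by
          rw [div_mul_eq_mul_div, div_le_div_iff₀ (by positivity) (by positivity)]
          have h := mul_le_mul_of_nonneg_right hγ2 (by positivity : (0:ℝ) ≤ γ*L^2)
          nlinarith [h, mul_nonneg (le_of_lt hγpos) (sq_nonneg L)]
  · rw [if_neg (by omega), key (k-1)]
    have hSk1 := S_bound (k-1)
    have hcast : ((k-1:ℕ):ℝ) = (k:ℝ) - 1 := by
      have h1 : 1 ≤ k := hk1
      push_cast [h1]; ring
    have hSk1' : ∑ p ∈ antidiagonal (k-1), ((1:ℝ)/((p.1:ℝ)+1)^2) * ((1:ℝ)/((p.2:ℝ)+1)^2)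
        ≤ (33/5)/((k:ℝ)+1)^2 := by
      rw [hcast] at hSk1
      convert hSk1 using 3
      ring
    have hSk1nn := S_nonneg (k-1)
    have hpows : γ^((k-1)+2) = γ^(k+1) := by congr 1; omega
    rw [hpows]
    have step1 : γ^(k+2)/(100*L^2) * (∑ p ∈ antidiagonal k, ((1:ℝ)/((p.1:ℝ)+1)^2) * ((1:ℝ)/((p.2:ℝ)+1)^2))
        + γ^(k+1)/(100*L^2) * (∑ p ∈ antidiagonal (k-1), ((1:ℝ)/((p.1:ℝ)+1)^2) * ((1:ℝ)/((p.2:ℝ)+1)^2))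
        ≤ γ^(k+2)/(100*L^2) * ((33/5)/((k:ℝ)+2)^2) + γ^(k+1)/(100*L^2) * ((33/5)/((k:ℝ)+1)^2) := by
      gcongr <;> positivity
    refine step1.trans ?_
    have hmain := main (((k:ℝ)+2)^2) (((k:ℝ)+1)^2) (by positivity) (by nlinarith)
    calc γ^(k+2)/(100*L^2) * ((33/5)/((k:ℝ)+2)^2) + γ^(k+1)/(100*L^2) * ((33/5)/((k:ℝ)+1)^2)
        = γ^(k+1)/(100*L^2) * (γ * ((33/5)/((k:ℝ)+2)^2) + (33/5)/((k:ℝ)+1)^2) := by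
          rw [pow_succ]; ring
      _ ≤ γ^(k+1)/(100*L^2) * (10/((k:ℝ)+1)^2) :=
          mul_le_mul_of_nonneg_left hmain (by positivity)
      _ = γ^(k+1)/(10*L^2*((k:ℝ)+1)^2) := by
          field_simp
          ring
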